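/- For all nonzero integers i and j, the integer 6·(i + j(6i + 1)) + 1 is not prime (its absolute value is not a prime number). -/
import Mathlib

theorem stmt_9 (i j : ℤ) (hi : i ≠ 0) (hj : j ≠ 0) :
    ¬ Nat.Prime (6 * (i + j * (6 * i + 1)) + 1).natAbs := by
  have h : 6 * (i + j * (6 * i + 1)) + 1 = (6 * i + 1) * (6 * j + 1) := by ring
  rw [h, Int.natAbs_mul]
  intro hp
  rcases Nat.prime_mul_iff.mp hp with ⟨_, h1⟩ | ⟨_, h1⟩ <;> omega
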